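/- Let $B$ be as above (random sample mean set to 0 on empty sample). Then $\mathrm{Var}[\hat{\mu}] \leq \mathbb{E}\left[\frac{\sigma^2}{B}\,\middle|\, B > 0\right] + \Pr[B = 0]\,\mu^2$, assuming $\Pr[B > 0] > 0$. -/

import Mathlib

open MeasureTheory ProbabilityTheory Finset
open scoped ENNReal

theorem stmt_14 {Ω : Type*} [MeasureSpace Ω] [IsProbabilityMeasure (ℙ : Measure Ω)]
    (B : Ω → ℕ) (hB : Measurable B)
    (X : ℕ → Ω → ℝ) (hL2 : ∀ i, MemLp (X i) 2 ℙ)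
    (hindep : iIndepFun X ℙ)
    (hident : ∀ i j, IdentDistrib (X i) (X j) ℙ ℙ)
    (hBX : Indep (MeasurableSpace.comap B inferInstance)
      (⨆ i, MeasurableSpace.comap (X i) inferInstance) ℙ)
    (μ σ2 : ℝ) (hmean : ∀ i, ∫ ω, X i ω ∂ℙ = μ)
    (hvar : ∀ i, variance (X i) ℙ = σ2)
    (hpos : ℙ {ω | 0 < B ω} ≠ 0)
    (μhat : Ω → ℝ)
    (hμhat : ∀ ω, μhat ω =
      if 0 < B ω then (∑ i ∈ Finset.range (B ω), X i ω) / (B ω : ℝ) else 0) :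
    variance μhat ℙ ≤
      (∫ ω, σ2 / (B ω : ℝ) ∂(ℙ[|{ω | 0 < B ω}]))
        + (ℙ {ω | B ω = 0}).toReal * μ ^ 2 := by
  classical
  have hσ2 : 0 ≤ σ2 := (hvar 0) ▸ variance_nonneg _ _
  set s : ℕ → Set Ω := fun b => B ⁻¹' {b} with hs
  have hs_meas : ∀ b, MeasurableSet (s b) := fun b => hB (measurableSet_singleton b)
  have hs_disj : Pairwise (Function.onFun Disjoint s) := fun i j hij =>
    Set.disjoint_left.mpr (fun ω hi hj => hij (by
      simp only [hs, Set.mem_preimage, Set.mem_singleton_iff] at hi hj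
      rw [← hi, ← hj]))
  have hs_union : (⋃ b, s b) = Set.univ := by
    ext ω; simp [hs]
  -- sample means
  set Sm : ℕ → Ω → ℝ := fun b ω => (∑ i ∈ Finset.range b, X i ω) / b with hSm
  have hSm_eq : ∀ b, Sm b = fun ω => ((b : ℝ))⁻¹ * (∑ i ∈ Finset.range b, X i) ω := by
    intro b; funext ω
    simp [hSm, Finset.sum_apply, div_eq_inv_mul]
  have hSmL2 : ∀ b, MemLp (Sm b) 2 ℙ := by
    intro b
    rw [hSm_eq b]
    exact (memLp_finset_sum' _ (fun i _ => hL2 i)).const_mul _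
  have hSm_int : ∀ b : ℕ, 1 ≤ b → ∫ ω, Sm b ω ∂ℙ = μ := by
    intro b hb
    have hb' : (b : ℝ) ≠ 0 := Nat.cast_ne_zero.mpr (by omega)
    simp only [hSm]
    rw [integral_div, integral_finset_sum _ (fun i _ => (hL2 i).integrable one_le_two)]
    simp only [hmean, Finset.sum_const, Finset.card_range, nsmul_eq_mul]
    field_simp
  have hSm_var : ∀ b : ℕ, 1 ≤ b → variance (Sm b) ℙ = σ2 / b := by
    intro b hb
    have hb' : (b : ℝ) ≠ 0 := Nat.cast_ne_zero.mpr (by omega)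
    have hsum : variance (∑ i ∈ Finset.range b, X i) ℙ = b * σ2 := by
      rw [IndepFun.variance_sum (fun i _ => hL2 i)
        (fun i _ j _ hij => hindep.indepFun hij)]
      simp [hvar, Finset.sum_const, Finset.card_range, nsmul_eq_mul]
    rw [hSm_eq b, variance_const_mul, hsum]
    field_simp
  -- measurability wrt m'
  have hX_meas' : ∀ i, Measurable[⨆ i, MeasurableSpace.comap (X i) inferInstance] (X i) := fun i =>
    Measurable.of_comap_le (le_iSup (fun i => MeasurableSpace.comap (X i) inferInstance) i)
  have hSm_meas' : ∀ b, Measurable[⨆ i, MeasurableSpace.comap (X i) inferInstance] (Sm b) := by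
    intro b
    exact Measurable.div_const (Finset.measurable_sum _ (fun i _ => hX_meas' i)) _
  -- independence transfer, real version
  have key : ∀ (b : ℕ) (h : Ω → ℝ), Measurable[⨆ i, MeasurableSpace.comap (X i) inferInstance] h → Integrable h ℙ →
      ∫ ω in s b, h ω ∂ℙ = (ℙ (s b)).toReal * ∫ ω, h ω ∂ℙ := by
    intro b h hmeas hint
    set φ : Ω → ℝ := fun ω => Set.indicator (s b) (fun _ => (1:ℝ)) ω with hφdef
    have hφB : φ = (fun n => Set.indicator ({b} : Set ℕ) (fun _ => (1:ℝ)) n) ∘ B := by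
      funext ω
      by_cases hω : B ω = b <;> simp [hφdef, hs, Set.indicator, hω]
    have hφmeas : Measurable[MeasurableSpace.comap B inferInstance] φ := by
      rw [hφB]
      exact Measurable.comp measurable_from_top (Measurable.of_comap_le le_rfl)
    have hiF : IndepFun φ h ℙ :=
      indep_of_indep_of_le_right (indep_of_indep_of_le_left hBX hφmeas.comap_le)
        hmeas.comap_le
    have hmul := IndepFun.integral_fun_mul_eq_mul_integral hiF
      ((integrable_const (1:ℝ)).indicator (hs_meas b)).aestronglyMeasurable hint.aestronglyMeasurable
    have h1 : ∫ ω, φ ω * h ω ∂ℙ = ∫ ω in s b, h ω ∂ℙ := by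
      rw [← integral_indicator (hs_meas b)]
      congr 1; funext ω
      by_cases hω : ω ∈ s b <;> simp [hφdef, Set.indicator, hω]
    have h2 : ∫ ω, φ ω ∂ℙ = (ℙ (s b)).toReal := by
      rw [hφdef]
      simp [integral_indicator_const, hs_meas b, measureReal_def]
    rw [← h1]
    rw [h2] at hmul
    exact hmul
  -- independence transfer, lintegral version
  have keyL : ∀ (b : ℕ) (h : Ω → ℝ≥0∞), Measurable[⨆ i, MeasurableSpace.comap (X i) inferInstance] h → AEMeasurable h ℙ →
      ∫⁻ ω in s b, h ω ∂ℙ = ℙ (s b) * ∫⁻ ω, h ω ∂ℙ := by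
    intro b h hmeas hae
    set φ : Ω → ℝ≥0∞ := fun ω => Set.indicator (s b) (fun _ => (1:ℝ≥0∞)) ω with hφdef
    have hφB : φ = (fun n => Set.indicator ({b} : Set ℕ) (fun _ => (1:ℝ≥0∞)) n) ∘ B := by
      funext ω
      by_cases hω : B ω = b <;> simp [hφdef, hs, Set.indicator, hω]
    have hφmeas : Measurable[MeasurableSpace.comap B inferInstance] φ := by
      rw [hφB]
      exact Measurable.comp measurable_from_top (Measurable.of_comap_le le_rfl)
    have hφmeas' : Measurable φ := measurable_const.indicator (hs_meas b)
    have hiF : IndepFun φ h ℙ :=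
      indep_of_indep_of_le_right (indep_of_indep_of_le_left hBX hφmeas.comap_le)
        hmeas.comap_le
    have hmul := lintegral_mul_eq_lintegral_mul_lintegral_of_indepFun''
      hφmeas'.aemeasurable hae hiF
    have h1 : ∫⁻ ω, φ ω * h ω ∂ℙ = ∫⁻ ω in s b, h ω ∂ℙ := by
      rw [← lintegral_indicator (hs_meas b) _]
      congr 1; funext ω
      by_cases hω : ω ∈ s b <;> simp [hφdef, Set.indicator, hω]
    have h2 : ∫⁻ ω, φ ω ∂ℙ = ℙ (s b) := by
      rw [hφdef]
      simp [lintegral_indicator (hs_meas b) _]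
    rw [← h1, hmul, h2]
  -- a.e. strong measurability of μhat
  have hμhat_aesm : AEStronglyMeasurable μhat ℙ := by
    set X' : ℕ → Ω → ℝ := fun i => (hL2 i).1.mk (X i) with hX'
    have hX'm : ∀ i, Measurable (X' i) := fun i => (hL2 i).1.stronglyMeasurable_mk.measurable
    set g : Ω → ℝ := fun ω =>
      if 0 < B ω then (∑ i ∈ Finset.range (B ω), X' i ω) / (B ω : ℝ) else 0 with hg
    have hgm : Measurable g := by
      have h1 : Measurable (fun p : Ω × ℕ =>
          if 0 < p.2 then (∑ i ∈ Finset.range p.2, X' i p.1) / (p.2 : ℝ) else 0) := by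
        apply measurable_from_prod_countable_left
        intro b
        by_cases hb : 0 < b
        · simp only [hb, if_true]
          exact (Finset.measurable_sum _ (fun i _ => hX'm i)).div_const _
        · simp only [hb, if_false]
          exact measurable_const
      exact h1.comp (measurable_id.prodMk hB)
    apply hgm.aestronglyMeasurable.congr
    have hae : ∀ᵐ ω ∂ℙ, ∀ i, X i ω = X' i ω := ae_all_iff.mpr (fun i => (hL2 i).1.ae_eq_mk)
    filter_upwards [hae] with ω hω
    rw [hμhat ω, hg]
    simp only
    split <;> simp [hω]
  -- MemLp μhat 2
  have hμhat_sq_int : Integrable (fun ω => μhat ω ^ 2) ℙ := by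
    constructor
    · exact hμhat_aesm.pow 2
    · show (∫⁻ ω, (‖μhat ω ^ 2‖₊ : ℝ≥0∞) ∂ℙ) < ⊤
      have heq : ∀ ω, (‖μhat ω ^ 2‖₊ : ℝ≥0∞) = (‖μhat ω‖₊ : ℝ≥0∞) ^ 2 := by
        intro ω; rw [← ENNReal.coe_pow]; norm_cast; exact nnnorm_pow _ _
      calc ∫⁻ ω, (‖μhat ω ^ 2‖₊ : ℝ≥0∞) ∂ℙ
          = ∫⁻ ω, (‖μhat ω‖₊ : ℝ≥0∞) ^ 2 ∂ℙ := by
            exact lintegral_congr heq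
        _ = ∑' b, ∫⁻ ω in s b, (‖μhat ω‖₊ : ℝ≥0∞) ^ 2 ∂ℙ := by
            rw [← setLIntegral_univ, ← hs_union, lintegral_iUnion hs_meas hs_disj]
        _ ≤ ∑' b, ℙ (s b) * ENNReal.ofReal (σ2 + μ ^ 2) := by
            apply ENNReal.tsum_le_tsum
            intro b
            rcases Nat.eq_zero_or_pos b with hb | hb
            · subst hb
              have : ∫⁻ ω in s 0, (‖μhat ω‖₊ : ℝ≥0∞) ^ 2 ∂ℙ = 0 := by
                rw [setLIntegral_congr_fun (hs_meas 0)
                  (fun ω hω => ?_), lintegral_zero]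
                have hbω : B ω = 0 := hω
                rw [hμhat ω]
                simp [hbω]
              rw [this]; exact zero_le
            · have hb1 : 1 ≤ b := hb
              have hcongr : ∫⁻ ω in s b, (‖μhat ω‖₊ : ℝ≥0∞) ^ 2 ∂ℙ
                  = ∫⁻ ω in s b, (‖Sm b ω‖₊ : ℝ≥0∞) ^ 2 ∂ℙ := by
                apply setLIntegral_congr_fun (hs_meas b)
                intro ω hω
                have hbω : B ω = b := hω
                show (‖μhat ω‖₊ : ℝ≥0∞) ^ 2 = (‖Sm b ω‖₊ : ℝ≥0∞) ^ 2
                rw [hμhat ω, hbω, if_pos hb]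
              have hcm : Measurable[⨆ i, MeasurableSpace.comap (X i) inferInstance]
                  fun ω => (‖Sm b ω‖₊ : ℝ≥0∞) ^ 2 := by
                have hg : Measurable fun x : ℝ => (‖x‖₊ : ℝ≥0∞) ^ 2 :=
                  (measurable_nnnorm.coe_nnreal_ennreal).pow_const 2
                exact hg.comp (hSm_meas' b)
              have ham : AEMeasurable (fun ω => (‖Sm b ω‖₊ : ℝ≥0∞) ^ 2) ℙ :=
                (hSmL2 b).aestronglyMeasurable.enorm.pow_const 2
              rw [hcongr, keyL b _ hcm ham]
              apply mul_le_mul_right _ _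
              have hval : ∫⁻ ω, (‖Sm b ω‖₊ : ℝ≥0∞) ^ 2 ∂ℙ
                  = ENNReal.ofReal (∫ ω, Sm b ω ^ 2 ∂ℙ) := by
                rw [ofReal_integral_eq_lintegral_ofReal (hSmL2 b).integrable_sq
                  (ae_of_all _ (fun ω => sq_nonneg _))]
                apply lintegral_congr
                intro ω
                rw [← ENNReal.ofReal_coe_nnreal, coe_nnnorm, ← ENNReal.ofReal_pow (norm_nonneg _)]
                congr 1
                rw [Real.norm_eq_abs, sq_abs]
              rw [hval]
              apply ENNReal.ofReal_le_ofReal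
              have hv := variance_eq_sub (hSmL2 b)
              have : ∫ ω, Sm b ω ^ 2 ∂ℙ = σ2 / b + μ ^ 2 := by
                have := hSm_var b hb1
                rw [variance_eq_sub (hSmL2 b), hSm_int b hb1] at this
                simp only [Pi.pow_apply] at this
                linarith
              rw [this]
              have : σ2 / (b : ℝ) ≤ σ2 := by
                apply div_le_self hσ2
                exact_mod_cast hb1
              linarith
        _ = ENNReal.ofReal (σ2 + μ ^ 2) := by
            rw [ENNReal.tsum_mul_right, ← measure_iUnion hs_disj hs_meas, hs_union,
              measure_univ, one_mul]
        _ < ⊤ := ENNReal.ofReal_lt_top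
  have hμhatL2 : MemLp μhat 2 ℙ :=
    (memLp_two_iff_integrable_sq hμhat_aesm).mpr hμhat_sq_int
  have hμhat_int : Integrable μhat ℙ := hμhatL2.integrable one_le_two
  -- integrability of (μhat - μ)^2
  have hE2int : Integrable (fun ω => (μhat ω - μ) ^ 2) ℙ :=
    (hμhatL2.sub (memLp_const μ)).integrable_sq
  -- variance ≤ E[(μhat - μ)^2]
  have hVarE2 : variance μhat ℙ ≤ ∫ ω, (μhat ω - μ) ^ 2 ∂ℙ := by
    rw [variance_eq_sub hμhatL2]
    have hexp : ∫ ω, (μhat ω - μ) ^ 2 ∂ℙ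
        = (∫ ω, μhat ω ^ 2 ∂ℙ) - 2 * μ * (∫ ω, μhat ω ∂ℙ) + μ ^ 2 := by
      have hsub : Integrable (fun ω => μhat ω ^ 2 - 2 * μ * μhat ω) ℙ :=
        hμhat_sq_int.sub (hμhat_int.const_mul (2 * μ))
      calc ∫ ω, (μhat ω - μ) ^ 2 ∂ℙ
          = ∫ ω, ((μhat ω ^ 2 - 2 * μ * μhat ω) + μ ^ 2) ∂ℙ := by
            apply integral_congr_ae
            filter_upwards with ω
            ring
        _ = (∫ ω, (μhat ω ^ 2 - 2 * μ * μhat ω) ∂ℙ) + ∫ _, (μ ^ 2 : ℝ) ∂ℙ :=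
            integral_add hsub (integrable_const _)
        _ = (∫ ω, μhat ω ^ 2 ∂ℙ) - (∫ ω, 2 * μ * μhat ω ∂ℙ) + μ ^ 2 := by
            rw [integral_sub hμhat_sq_int (hμhat_int.const_mul (2 * μ)), integral_const]
            simp [measure_univ]
        _ = (∫ ω, μhat ω ^ 2 ∂ℙ) - 2 * μ * (∫ ω, μhat ω ∂ℙ) + μ ^ 2 := by
            rw [integral_const_mul]
    rw [hexp]
    simp only [Pi.pow_apply]
    nlinarith [sq_nonneg ((∫ ω, μhat ω ∂ℙ) - μ)]
  -- value of E[(μhat - μ)^2]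
  set T : ℝ := ∑' n : ℕ, (ℙ (s (n + 1))).toReal * (σ2 / (n + 1)) with hT
  have hpiece : ∀ n : ℕ, ∫ ω in s (n + 1), (μhat ω - μ) ^ 2 ∂ℙ
      = (ℙ (s (n + 1))).toReal * (σ2 / (n + 1)) := by
    intro n
    set b := n + 1 with hbdef
    have hb1 : 1 ≤ b := Nat.le_add_left 1 n
    have h1 : ∫ ω in s b, (μhat ω - μ) ^ 2 ∂ℙ = ∫ ω in s b, (Sm b ω - μ) ^ 2 ∂ℙ := by
      apply setIntegral_congr_fun (hs_meas b)
      intro ω hω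
      have hbω : B ω = b := hω
      have hb0 : 0 < b := by omega
      show (μhat ω - μ) ^ 2 = (Sm b ω - μ) ^ 2
      rw [hμhat ω, hbω, if_pos hb0]
    have hk2 : MemLp (fun ω => Sm b ω - μ) 2 ℙ := (hSmL2 b).sub (memLp_const μ)
    have hmeas' : Measurable[⨆ i, MeasurableSpace.comap (X i) inferInstance] (fun ω => (Sm b ω - μ) ^ 2) :=
      ((hSm_meas' b).sub measurable_const).pow_const 2
    have h2 := key b (fun ω => (Sm b ω - μ) ^ 2) hmeas' hk2.integrable_sq
    rw [h1, h2]
    have h3 : ∫ ω, (Sm b ω - μ) ^ 2 ∂ℙ = σ2 / b := by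
      have hveq := variance_eq_integral (hSmL2 b).1.aemeasurable
      rw [hSm_var b hb1, hSm_int b hb1] at hveq
      exact hveq.symm
    rw [h3, hbdef]
    push_cast
    ring_nf
  have hpiece0 : ∫ ω in s 0, (μhat ω - μ) ^ 2 ∂ℙ = (ℙ (s 0)).toReal * μ ^ 2 := by
    have h1 : ∫ ω in s 0, (μhat ω - μ) ^ 2 ∂ℙ = ∫ ω in s 0, μ ^ 2 ∂ℙ := by
      apply setIntegral_congr_fun (hs_meas 0)
      intro ω hω
      have hbω : B ω = 0 := hω
      have hz : μhat ω = 0 := by rw [hμhat ω]; simp [hbω]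
      show (μhat ω - μ) ^ 2 = μ ^ 2
      rw [hz]; ring
    rw [h1, setIntegral_const, smul_eq_mul, measureReal_def]
  have hsummable : Summable fun b => ∫ ω in s b, (μhat ω - μ) ^ 2 ∂ℙ :=
    (hasSum_integral_iUnion hs_meas hs_disj
      (by rw [hs_union]; exact hE2int.integrableOn)).summable
  have hE2val : ∫ ω, (μhat ω - μ) ^ 2 ∂ℙ = (ℙ (s 0)).toReal * μ ^ 2 + T := by
    have h0 : ∫ ω, (μhat ω - μ) ^ 2 ∂ℙ = ∑' b, ∫ ω in s b, (μhat ω - μ) ^ 2 ∂ℙ := by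
      rw [← setIntegral_univ, ← hs_union,
        integral_iUnion hs_meas hs_disj (by rw [hs_union]; exact hE2int.integrableOn)]
    rw [h0, Summable.tsum_eq_zero_add hsummable, hpiece0]
    congr 1
    exact tsum_congr hpiece
  -- the conditional expectation term
  have hA : {ω | 0 < B ω} = ⋃ n, s (n + 1) := by
    ext ω
    simp only [Set.mem_setOf_eq, Set.mem_iUnion, hs, Set.mem_preimage, Set.mem_singleton_iff]
    constructor
    · intro h; exact ⟨B ω - 1, by omega⟩
    · rintro ⟨n, hn⟩; omega
  have hw_int : Integrable (fun ω => σ2 / (B ω : ℝ)) ℙ := by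
    have hm : Measurable fun ω => σ2 / (B ω : ℝ) :=
      (measurable_from_top (f := fun n : ℕ => σ2 / (n : ℝ))).comp hB
    apply (integrable_const σ2).mono' hm.aestronglyMeasurable
    apply ae_of_all
    intro ω
    rcases Nat.eq_zero_or_pos (B ω) with h | h
    · simp [h, hσ2]
    · rw [Real.norm_eq_abs, abs_of_nonneg (div_nonneg hσ2 (by positivity))]
      apply div_le_self hσ2
      exact_mod_cast h
  have hdisj' : Pairwise (Function.onFun Disjoint fun n : ℕ => s (n + 1)) := fun i j hij =>
    hs_disj (by omega)
  have hcondval : (∫ ω, σ2 / (B ω : ℝ) ∂(ℙ[|{ω | 0 < B ω}]))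
      = ((ℙ {ω | 0 < B ω}).toReal)⁻¹ * T := by
    rw [ProbabilityTheory.cond, integral_smul_measure, ENNReal.toReal_inv, smul_eq_mul]
    congr 1
    show ∫ ω in {ω | 0 < B ω}, σ2 / (B ω : ℝ) ∂ℙ = T
    rw [hA, integral_iUnion (fun n => hs_meas (n + 1)) hdisj'
      (by rw [← hA]; exact hw_int.integrableOn)]
    apply tsum_congr
    intro n
    have h1 : ∫ ω in s (n + 1), σ2 / (B ω : ℝ) ∂ℙ
        = ∫ ω in s (n + 1), σ2 / ((n + 1 : ℕ) : ℝ) ∂ℙ := by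
      apply setIntegral_congr_fun (hs_meas (n + 1))
      intro ω hω
      have hbω : B ω = n + 1 := hω
      show σ2 / (B ω : ℝ) = σ2 / ((n + 1 : ℕ) : ℝ)
      rw [hbω]
    rw [h1, setIntegral_const, smul_eq_mul, measureReal_def]
    push_cast
    ring
  -- final assembly
  set p := (ℙ {ω | 0 < B ω}).toReal with hp
  have hp_pos : 0 < p := ENNReal.toReal_pos hpos (measure_ne_top _ _)
  have hp_le : p ≤ 1 := by
    have := prob_le_one (μ := (ℙ : Measure Ω)) (s := {ω | 0 < B ω})
    calc p ≤ (1 : ℝ≥0∞).toReal := ENNReal.toReal_mono ENNReal.one_ne_top this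
      _ = 1 := by simp
  have hT_nonneg : 0 ≤ T := tsum_nonneg (fun n =>
    mul_nonneg ENNReal.toReal_nonneg (div_nonneg hσ2 (by positivity)))
  have hq : ℙ {ω | B ω = 0} = ℙ (s 0) := by congr 1
  have hinv : 1 ≤ p⁻¹ := (one_le_inv₀ hp_pos).mpr hp_le
  calc variance μhat ℙ ≤ ∫ ω, (μhat ω - μ) ^ 2 ∂ℙ := hVarE2
    _ = (ℙ (s 0)).toReal * μ ^ 2 + T := hE2val
    _ ≤ (ℙ (s 0)).toReal * μ ^ 2 + p⁻¹ * T := by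
        have : T ≤ p⁻¹ * T := le_mul_of_one_le_left hT_nonneg hinv
        linarith
    _ = (∫ ω, σ2 / (B ω : ℝ) ∂(ℙ[|{ω | 0 < B ω}])) + (ℙ {ω | B ω = 0}).toReal * μ ^ 2 := by
        rw [hcondval, hq]
        ring
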